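/- Every orbit of the piecewise linear map (Y_1, Y_2) ↦ (Y_2, max(Y_2, 0) - Y_2 - Y_1) on ℝ² is periodic with period 7. Equivalently, any real sequence (Y_n) satisfying Y_{n+2} + Y_n = max(Y_{n+1}, 0) - Y_{n+1} for all n satisfies Y_{n+7} = Y_n for all n. -/

import Mathlib

private lemma seq_period (Y : ℕ → ℝ)
    (h : ∀ n, Y (n + 2) + Y n = max (Y (n + 1)) 0 - Y (n + 1)) :
    ∀ n, Y (n + 7) = Y n := by
  intro n
  have h1 : Y (n + 3) + Y (n + 1) = max (Y (n + 2)) 0 - Y (n + 2) := h (n + 1)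
  have h2 : Y (n + 4) + Y (n + 2) = max (Y (n + 3)) 0 - Y (n + 3) := h (n + 2)
  have h3 : Y (n + 5) + Y (n + 3) = max (Y (n + 4)) 0 - Y (n + 4) := h (n + 3)
  have h4 : Y (n + 6) + Y (n + 4) = max (Y (n + 5)) 0 - Y (n + 5) := h (n + 4)
  have h5 : Y (n + 7) + Y (n + 5) = max (Y (n + 6)) 0 - Y (n + 6) := h (n + 5)
  have h0 := h n
  simp only [max_def] at h0 h1 h2 h3 h4 h5
  split_ifs at h0 h1 h2 h3 h4 h5 <;> linarith

/-- Every orbit of the piecewise linear (tropical QRT) map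
`(Y₁,Y₂) ↦ (Y₂, [Y₂]₊ - Y₂ - Y₁)` on `ℝ²` is periodic with period 7;
equivalently, any real sequence satisfying
`Y_{n+2} + Y_n = [Y_{n+1}]₊ - Y_{n+1}` satisfies `Y_{n+7} = Y_n` for all `n`. -/
theorem tropical_qrt_period_seven :
    (∀ p : ℝ × ℝ,
        (fun q : ℝ × ℝ => (q.2, max q.2 0 - q.2 - q.1))^[7] p = p) ∧
      (∀ Y : ℕ → ℝ,
        (∀ n, Y (n + 2) + Y n = max (Y (n + 1)) 0 - Y (n + 1)) →
          ∀ n, Y (n + 7) = Y n) := by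
  refine ⟨?_, fun Y h n => seq_period Y h n⟩
  intro p
  set f : ℝ × ℝ → ℝ × ℝ := fun q => (q.2, max q.2 0 - q.2 - q.1) with hf
  set Y : ℕ → ℝ := fun n => (f^[n] p).1 with hY
  have key : ∀ n, f^[n + 1] p = ((f^[n] p).2, max (f^[n] p).2 0 - (f^[n] p).2 - (f^[n] p).1) := by
    intro n
    rw [Function.iterate_succ_apply']
  have hsnd : ∀ n, (f^[n] p).2 = Y (n + 1) := by
    intro n
    rw [hY]
    simp only [key n]
  have hrec : ∀ n, Y (n + 2) + Y n = max (Y (n + 1)) 0 - Y (n + 1) := by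
    intro n
    have e1 : Y (n + 2) = (f^[n+1] p).2 := (hsnd (n+1)).symm
    rw [e1, key n]
    simp only []
    rw [hsnd n]
    show _ - _ - Y n + Y n = _
    ring
  have hper := seq_period Y hrec
  have h7 : Y 7 = Y 0 := hper 0
  have h8 : Y 8 = Y 1 := hper 1
  have : f^[7] p = (Y 7, Y 8) := by
    ext
    · rfl
    · exact (hsnd 7).symm ▸ rfl
  rw [this, h7, h8]
  have : Y 1 = p.2 := by rw [hY]; simp [key 0]; rfl
  rw [this]
  rfl
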